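/- If (G, τ) is a Hausdorff Abelian first-countable paratopological group, then G is submetrizable. -/

import Mathlib

open Topology Filter Set Pointwise Uniformity

private lemma mem_of_mem_nhds_aux {X : Type*} (tx : TopologicalSpace X) {s : Set X} {x : X}
    (h : s ∈ @nhds X tx x) : x ∈ s :=
  mem_of_mem_nhds h

/-- If `(G, τ)` is a Hausdorff Abelian first-countable paratopological group,
then `G` is submetrizable: there is a metrizable topology on `G` coarser than `τ`. -/
theorem hausdorff_abelian_firstCountable_paratopological_group_submetrizable
    {G : Type*} [CommGroup G] [t : TopologicalSpace G] [T2Space G] [ContinuousMul G]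
    [FirstCountableTopology G] :
    ∃ t' : TopologicalSpace G, t ≤ t' ∧ @TopologicalSpace.MetrizableSpace G t' := by
  -- an antitone basis of open neighborhoods of 1
  obtain ⟨s, hs, hbasis⟩ :=
    (nhds_basis_opens (1 : G)).exists_antitone_subbasis
  -- a choice function shrinking open neighborhoods of 1
  have key : ∀ O : Set G, ∃ V : Set G, IsOpen V ∧ (1 : G) ∈ V ∧
      ((1 : G) ∈ O → IsOpen O → V * V ⊆ O) := by
    intro O
    by_cases hO : (1 : G) ∈ O ∧ IsOpen O
    · obtain ⟨V, hVo, hV1, hVV⟩ :=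
        exists_open_nhds_one_split (hO.2.mem_nhds hO.1)
      refine ⟨V, hVo, hV1, fun _ _ => ?_⟩
      rintro x ⟨a, ha, b, hb, rfl⟩
      exact hVV a ha b hb
    · exact ⟨Set.univ, isOpen_univ, trivial, fun h1 h2 => absurd ⟨h1, h2⟩ hO⟩
  choose f hfo hf1 hff using key
  -- the recursive sequence U
  set U : ℕ → Set G := fun n => Nat.rec (f (s 0)) (fun n Un => f (Un ∩ s (n + 1))) n with hU
  have hUo : ∀ n, IsOpen (U n) := by
    intro n; cases n <;> exact hfo _
  have hU1 : ∀ n, (1 : G) ∈ U n := by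
    intro n; cases n <;> exact hf1 _
  have hUmul : ∀ n, U (n + 1) * U (n + 1) ⊆ U n ∩ s (n + 1) := by
    intro n
    exact hff _ ⟨hU1 n, (hs (n + 1)).1⟩ ((hUo n).inter (hs (n + 1)).2)
  have hU0 : U 0 * U 0 ⊆ s 0 := hff _ (hs 0).1 (hs 0).2
  have hUsub : ∀ n, U n ⊆ s n := by
    intro n x hx
    cases n with
    | zero => exact hU0 ⟨x, hx, 1, hU1 0, mul_one x⟩
    | succ m => exact (hUmul m ⟨x, hx, 1, hU1 (m + 1), mul_one x⟩).2
  -- the symmetric open sets W n = U n * (U n)⁻¹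
  set W : ℕ → Set G := fun n => {x | ∃ u ∈ U n, ∃ v ∈ U n, x = u * v⁻¹} with hW
  have hW1 : ∀ n, (1 : G) ∈ W n := fun n => ⟨1, hU1 n, 1, hU1 n, by simp⟩
  have hWsymm : ∀ n, ∀ x ∈ W n, x⁻¹ ∈ W n := by
    rintro n x ⟨u, hu, v, hv, rfl⟩
    exact ⟨v, hv, u, hu, by rw [mul_inv, inv_inv, mul_comm]⟩
  have hWmul : ∀ n, ∀ x ∈ W (n + 1), ∀ y ∈ W (n + 1), x * y ∈ W n := by
    rintro n x ⟨a, ha, b, hb, rfl⟩ y ⟨c, hc, d, hd, rfl⟩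
    refine ⟨a * c, (hUmul n ⟨a, ha, c, hc, rfl⟩).1,
      b * d, (hUmul n ⟨b, hb, d, hd, rfl⟩).1, ?_⟩
    rw [mul_inv]
    exact mul_mul_mul_comm a b⁻¹ c d⁻¹
  have hWanti : ∀ n, W (n + 1) ⊆ W n := by
    intro n x hx
    have := hWmul n x hx 1 (hW1 (n + 1))
    simpa using this
  have hWopen : ∀ n, IsOpen (W n) := by
    intro n
    have : W n = ⋃ v ∈ U n, (fun x => x * v) ⁻¹' (U n) := by
      ext x
      simp only [mem_iUnion, mem_preimage]
      constructor
      · rintro ⟨u, hu, v, hv, rfl⟩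
        exact ⟨v, hv, by simpa using hu⟩
      · rintro ⟨v, hv, hxv⟩
        exact ⟨x * v, hxv, v, hv, by rw [mul_inv_cancel_right]⟩
    rw [this]
    exact isOpen_biUnion fun v _ => (hUo n).preimage (continuous_mul_right v)
  -- separation: only 1 is in all W n
  have hWsep : ∀ g : G, (∀ n, g ∈ W n) → g = 1 := by
    intro g hg
    by_contra hne
    obtain ⟨V, O, hVo, hOo, hgV, h1O, hdisj⟩ := t2_separation hne
    have hN : O ∩ (fun y => g * y) ⁻¹' V ∈ 𝓝 (1 : G) := by
      refine Filter.inter_mem (hOo.mem_nhds h1O) ?_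
      exact (hVo.preimage (continuous_mul_left g)).mem_nhds (by simpa using hgV)
    obtain ⟨n, -, hn⟩ := hbasis.1.mem_iff.1 hN
    obtain ⟨u, hu, v, hv, rfl⟩ := hg n
    have hu' := hn (hUsub n hu)
    have hv' := hn (hUsub n hv)
    have : u * v⁻¹ * v ∈ V := hv'.2
    rw [inv_mul_cancel_right] at this
    exact Set.disjoint_iff.1 hdisj ⟨this, hu'.1⟩
  -- the entourages
  set Vn : ℕ → Set (G × G) := fun n => {p | p.1⁻¹ * p.2 ∈ W n} with hVn
  have hVanti : ∀ n, Vn (n + 1) ⊆ Vn n := fun n p hp => hWanti n hp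
  have hVdir : Directed (· ≥ ·) Vn := by
    have : Antitone Vn := antitone_nat_of_succ_le hVanti
    exact this.directed_ge
  set F : Filter (G × G) := ⨅ n, 𝓟 (Vn n) with hF
  have hFbasis : F.HasBasis (fun _ : ℕ => True) Vn := hasBasis_iInf_principal hVdir
  -- build the uniform space
  have comp_sub : ∀ n, SetRel.comp (Vn (n + 1)) (Vn (n + 1)) ⊆ Vn n := by
    rintro n ⟨x, z⟩ ⟨y, hxy, hyz⟩
    have h := hWmul n _ hxy _ hyz
    show x⁻¹ * z ∈ W n
    have : x⁻¹ * y * (y⁻¹ * z) = x⁻¹ * z := by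
      rw [mul_assoc, ← mul_assoc y, mul_inv_cancel, one_mul]
    rwa [this] at h
  set core : UniformSpace.Core G :=
    { uniformity := F
      refl := by
        refine le_iInf fun n => ?_
        simp only [Filter.le_principal_iff, Filter.mem_principal]
        rintro ⟨x, y⟩ (rfl : x = y)
        show x⁻¹ * x ∈ W n
        simpa using hW1 n
      symm := by
        refine le_iInf fun n => ?_
        rw [Filter.le_principal_iff, Filter.mem_map]
        refine Filter.mem_of_superset (hFbasis.mem_of_mem trivial : Vn n ∈ F) ?_
        rintro ⟨x, y⟩ hxy
        show (y, x) ∈ Vn n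
        have := hWsymm n _ hxy
        simpa [hVn] using this
      comp := by
        refine (hFbasis.lift' (monotone_id.relComp monotone_id)).le_basis_iff hFbasis |>.2 ?_
        intro n _
        exact ⟨n + 1, trivial, comp_sub n⟩ } with hcore
  set u : UniformSpace G := UniformSpace.ofCore core with hu
  have huni : 𝓤[u] = F := rfl
  have hFbasis' : (𝓤[u]).HasBasis (fun _ : ℕ => True) Vn := huni ▸ hFbasis
  refine ⟨u.toTopologicalSpace, ?_, ?_⟩
  · -- coarser
    refine le_of_nhds_le_nhds fun x => ?_
    have hnb : (@nhds G u.toTopologicalSpace x).HasBasis (fun _ : ℕ => True)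
        (fun n => UniformSpace.ball x (Vn n)) := nhds_basis_uniformity' hFbasis'
    refine hnb.ge_iff.2 fun n _ => ?_
    have hb : UniformSpace.ball x (Vn n) = (fun y => x⁻¹ * y) ⁻¹' (W n) := rfl
    rw [hb]
    exact ((hWopen n).preimage (continuous_mul_left x⁻¹)).mem_nhds (by simpa using hW1 n)
  · -- metrizable
    have ht0 : @T0Space G u.toTopologicalSpace := by
      rw [@t0Space_iff_inseparable G u.toTopologicalSpace]
      intro x y hxy
      have hmem : ∀ n, y ∈ UniformSpace.ball x (Vn n) := by
        intro n
        have hball : UniformSpace.ball x (Vn n) ∈ @nhds G u.toTopologicalSpace x :=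
          @UniformSpace.ball_mem_nhds G u x _ (hFbasis'.mem_of_mem trivial)
        rw [show (@nhds G u.toTopologicalSpace x) = @nhds G u.toTopologicalSpace y from hxy] at hball
        exact mem_of_mem_nhds_aux u.toTopologicalSpace hball
      exact inv_mul_eq_one.1 (hWsep _ fun n => hmem n)
    have hcg : (𝓤[u]).IsCountablyGenerated := hFbasis'.isCountablyGenerated
    exact @UniformSpace.metrizableSpace G u hcg ht0
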